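/- arXiv:2303.11559 — 2 statements merged into one kernel-verified Lean document; each statement's English description precedes it below -/
import Mathlib

section
/- Let d ≥ 1 and let ν be a probability measure on the space of d×d complex matrices such that ν-almost every matrix P is Hermitian positive definite, and suppose ν is invariant under unitary conjugation: for every unitary d×d matrix U, the pushforward of ν under P ↦ U*·P·U equals ν. Assume that for unit vectors u the function P ↦ log(Re(u*·P·u)) is ν-integrable. Then: (a) for any two unit vectors u, v ∈ ℂ^d, ∫ log(Re(u*·P·u)) dν(P) = ∫ log(Re(v*·P·v)) dν(P); and (b) for every nonzero a ∈ ℂ^d and unit vector u, ∫ log(Re(a*·P·a)) dν(P) = log‖a‖² + ∫ log(Re(u*·P·u)) dν(P). (This is the lemma showing that for any unitarily invariant measure on Bergman metrics, the expected Bergman potential E_ν φ_P equals the reference potential φ_I up to an additive constant.) -/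
open MeasureTheory Matrix
open scoped ComplexOrder

/-- Borel measurable structure on `d × d` complex matrices, viewing a matrix as
an element of `ℂ^{d×d}`. -/
noncomputable instance matrixMeasurableSpace (d : ℕ) :
    MeasurableSpace (Matrix (Fin d) (Fin d) ℂ) :=
  (inferInstance : MeasurableSpace (Fin d → Fin d → ℂ))

/-- Any unit vector extends to an orthonormal basis with prescribed first vector. -/
lemma exists_onb_extension (d : ℕ) (hd : 1 ≤ d) (w : Fin d → ℂ)
    (hw : (∑ j, ‖w j‖ ^ 2) = 1) :
    ∃ b : OrthonormalBasis (Fin d) ℂ (EuclideanSpace ℂ (Fin d)),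
      b ⟨0, hd⟩ = (WithLp.toLp 2 w : EuclideanSpace ℂ (Fin d)) := by
  set i0 : Fin d := ⟨0, hd⟩
  have hnorm : ‖(WithLp.toLp 2 w : EuclideanSpace ℂ (Fin d))‖ = 1 := by
    rw [EuclideanSpace.norm_eq]
    have : (∑ j, ‖w j‖ ^ 2) = 1 := by
      simpa using hw
    rw [this, Real.sqrt_one]
  have horth : Orthonormal ℂ
      (Set.restrict {i0} (fun _ : Fin d => (WithLp.toLp 2 w : EuclideanSpace ℂ (Fin d)))) := by
    constructor
    · intro i; exact hnorm
    · intro i j hij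
      exact absurd (Subtype.ext ((Set.mem_singleton_iff.mp i.2).trans
        (Set.mem_singleton_iff.mp j.2).symm)) hij
  obtain ⟨b, hb⟩ := horth.exists_orthonormalBasis_extension_of_card_eq (by simp)
  exact ⟨b, hb i0 rfl⟩

/-- For unit vectors `u`, `v` there is a unitary matrix `U` with `U *ᵥ u = v`. -/
lemma exists_unitary_mulVec (d : ℕ) (hd : 1 ≤ d) (u v : Fin d → ℂ)
    (hu : (∑ j, ‖u j‖ ^ 2) = 1) (hv : (∑ j, ‖v j‖ ^ 2) = 1) :
    ∃ U : Matrix (Fin d) (Fin d) ℂ, Uᴴ * U = 1 ∧ U *ᵥ u = v := by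
  set i0 : Fin d := ⟨0, hd⟩
  obtain ⟨b, hb⟩ := exists_onb_extension d hd u hu
  obtain ⟨c, hc⟩ := exists_onb_extension d hd v hv
  set e : OrthonormalBasis (Fin d) ℂ (EuclideanSpace ℂ (Fin d)) :=
    EuclideanSpace.basisFun (Fin d) ℂ with he
  set U1 : Matrix (Fin d) (Fin d) ℂ := e.toBasis.toMatrix b with hU1
  set U2 : Matrix (Fin d) (Fin d) ℂ := e.toBasis.toMatrix c with hU2
  have hU1u : U1ᴴ * U1 = 1 := e.toMatrix_orthonormalBasis_conjTranspose_mul_self b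
  have hU2u : U2ᴴ * U2 = 1 := e.toMatrix_orthonormalBasis_conjTranspose_mul_self c
  have hU1u' : U1 * U1ᴴ = 1 := e.toMatrix_orthonormalBasis_self_mul_conjTranspose b
  have hcol : ∀ (f : OrthonormalBasis (Fin d) ℂ (EuclideanSpace ℂ (Fin d))),
      (e.toBasis.toMatrix f) *ᵥ Pi.single i0 1 = f i0 := by
    intro f
    funext k
    rw [Matrix.mulVec_single]
    simp [Module.Basis.toMatrix_apply, OrthonormalBasis.coe_toBasis_repr_apply,
      EuclideanSpace.basisFun_repr, he]
  have hU1e : U1 *ᵥ Pi.single i0 1 = u := by rw [hcol b, hb]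
  have hU2e : U2 *ᵥ Pi.single i0 1 = v := by rw [hcol c, hc]
  refine ⟨U2 * U1ᴴ, ?_, ?_⟩
  · rw [Matrix.conjTranspose_mul, Matrix.conjTranspose_conjTranspose]
    calc U1 * U2ᴴ * (U2 * U1ᴴ) = U1 * (U2ᴴ * U2) * U1ᴴ := by
          rw [Matrix.mul_assoc, Matrix.mul_assoc, Matrix.mul_assoc]
      _ = 1 := by rw [hU2u, Matrix.mul_one, hU1u']
  · have h1 : U1ᴴ *ᵥ u = Pi.single i0 1 := by
      rw [← hU1e, Matrix.mulVec_mulVec, hU1u, Matrix.one_mulVec]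
    rw [← Matrix.mulVec_mulVec, h1, hU2e]

/-- For a unitarily invariant probability measure `ν` on positive Hermitian
matrices, (a) the expectation of `log(u* P u)` is the same for all unit vectors
`u`, and (b) for any nonzero vector `a`, the expectation of `log(a* P a)` equals
`log ‖a‖²` plus that common constant. -/
theorem unitary_invariant_expected_potential (d : ℕ) (hd : 1 ≤ d)
    (ν : Measure (Matrix (Fin d) (Fin d) ℂ)) [IsProbabilityMeasure ν]
    (hpos : ∀ᵐ P ∂ν, Matrix.PosDef P)
    (hinv : ∀ U : Matrix (Fin d) (Fin d) ℂ, Uᴴ * U = 1 →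
      Measure.map (fun P => Uᴴ * P * U) ν = ν)
    (hint : ∀ u : Fin d → ℂ, (∑ j, ‖u j‖ ^ 2) = 1 →
      Integrable (fun P => Real.log ((star u ⬝ᵥ Matrix.mulVec P u).re)) ν) :
    (∀ u v : Fin d → ℂ,
      (∑ j, ‖u j‖ ^ 2) = 1 → (∑ j, ‖v j‖ ^ 2) = 1 →
      ∫ P, Real.log ((star u ⬝ᵥ Matrix.mulVec P u).re) ∂ν
        = ∫ P, Real.log ((star v ⬝ᵥ Matrix.mulVec P v).re) ∂ν)
    ∧ (∀ a u : Fin d → ℂ, a ≠ 0 → (∑ j, ‖u j‖ ^ 2) = 1 →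
      ∫ P, Real.log ((star a ⬝ᵥ Matrix.mulVec P a).re) ∂ν
        = Real.log (∑ j, ‖a j‖ ^ 2)
          + ∫ P, Real.log ((star u ⬝ᵥ Matrix.mulVec P u).re) ∂ν) := by
  -- measurability of the integrand
  have hmeas : ∀ w : Fin d → ℂ,
      Measurable (fun P : Matrix (Fin d) (Fin d) ℂ =>
        Real.log ((star w ⬝ᵥ Matrix.mulVec P w).re)) := by
    intro w
    apply Real.measurable_log.comp
    apply Complex.measurable_re.comp
    have : Measurable (fun P : Matrix (Fin d) (Fin d) ℂ => star w ⬝ᵥ Matrix.mulVec P w) := by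
      simp only [dotProduct, Matrix.mulVec]
      refine Finset.measurable_sum _ fun i _ => Measurable.mul measurable_const ?_
      refine Finset.measurable_sum _ fun j _ => Measurable.mul ?_ measurable_const
      exact (measurable_pi_apply j).comp (measurable_pi_apply i)
    exact this
  -- part (a)
  have parta : ∀ u v : Fin d → ℂ,
      (∑ j, ‖u j‖ ^ 2) = 1 → (∑ j, ‖v j‖ ^ 2) = 1 →
      ∫ P, Real.log ((star u ⬝ᵥ Matrix.mulVec P u).re) ∂ν
        = ∫ P, Real.log ((star v ⬝ᵥ Matrix.mulVec P v).re) ∂ν := by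
    intro u v hu hv
    obtain ⟨U, hUunit, hUu⟩ := exists_unitary_mulVec d hd u v hu hv
    have hTmeas : Measurable (fun P : Matrix (Fin d) (Fin d) ℂ => Uᴴ * P * U) := by
      apply measurable_pi_lambda; intro i
      apply measurable_pi_lambda; intro j
      simp only [Matrix.mul_apply]
      refine Finset.measurable_sum _ fun k _ => Measurable.mul ?_ measurable_const
      refine Finset.measurable_sum _ fun l _ => Measurable.mul measurable_const ?_
      exact (measurable_pi_apply k).comp (measurable_pi_apply l)
    have hquad : ∀ P : Matrix (Fin d) (Fin d) ℂ,
        star u ⬝ᵥ Matrix.mulVec (Uᴴ * P * U) u = star v ⬝ᵥ Matrix.mulVec P v := by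
      intro P
      rw [← hUu]
      rw [← Matrix.mulVec_mulVec, ← Matrix.mulVec_mulVec,
        dotProduct_mulVec, ← Matrix.star_mulVec]
    calc ∫ P, Real.log ((star u ⬝ᵥ Matrix.mulVec P u).re) ∂ν
        = ∫ P, Real.log ((star u ⬝ᵥ Matrix.mulVec P u).re)
            ∂(Measure.map (fun P => Uᴴ * P * U) ν) := by rw [hinv U hUunit]
      _ = ∫ P, Real.log ((star u ⬝ᵥ Matrix.mulVec (Uᴴ * P * U) u).re) ∂ν :=
          integral_map hTmeas.aemeasurable (hmeas u).aestronglyMeasurable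
      _ = ∫ P, Real.log ((star v ⬝ᵥ Matrix.mulVec P v).re) ∂ν := by
          simp_rw [hquad]
  refine ⟨parta, ?_⟩
  -- part (b)
  intro a u ha hu
  set s : ℝ := ∑ j, ‖a j‖ ^ 2 with hs
  have hs_pos : 0 < s := by
    have hnn : 0 ≤ s := Finset.sum_nonneg fun j _ => sq_nonneg _
    rcases hnn.lt_or_eq with h | h
    · exact h
    · exfalso
      apply ha
      funext j
      have := (Finset.sum_eq_zero_iff_of_nonneg
        (fun j _ => sq_nonneg (‖a j‖))).mp h.symm j (Finset.mem_univ j)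
      simpa using this
  set r : ℝ := Real.sqrt s with hr
  have hr_pos : 0 < r := Real.sqrt_pos.mpr hs_pos
  have hr_sq : r ^ 2 = s := Real.sq_sqrt hs_pos.le
  set u' : Fin d → ℂ := (r : ℂ)⁻¹ • a with hu'
  have hru' : (r : ℂ) • u' = a := by
    rw [hu', smul_smul, mul_inv_cancel₀ (by exact_mod_cast hr_pos.ne'), one_smul]
  have hu'_unit : (∑ j, ‖u' j‖ ^ 2) = 1 := by
    have : ∀ j, ‖u' j‖ ^ 2 = r⁻¹ ^ 2 * ‖a j‖ ^ 2 := by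
      intro j
      simp only [hu', Pi.smul_apply, smul_eq_mul, norm_mul, norm_inv,
        Complex.norm_real, Real.norm_eq_abs, abs_of_pos hr_pos, mul_pow]
    rw [Finset.sum_congr rfl fun j _ => this j, ← Finset.mul_sum, ← hs,
      inv_pow, hr_sq, inv_mul_cancel₀ hs_pos.ne']
  have hu'_ne : u' ≠ 0 := by
    intro h
    apply ha
    rw [← hru', h, smul_zero]
  -- pointwise identity a.e.
  have hptwise : ∀ᵐ P ∂ν,
      Real.log ((star a ⬝ᵥ Matrix.mulVec P a).re)
        = Real.log s + Real.log ((star u' ⬝ᵥ Matrix.mulVec P u').re) := by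
    filter_upwards [hpos] with P hP
    have hq : star a ⬝ᵥ Matrix.mulVec P a
        = ((s : ℝ) : ℂ) * (star u' ⬝ᵥ Matrix.mulVec P u') := by
      rw [← hru', star_smul, Matrix.mulVec_smul, smul_dotProduct,
        dotProduct_smul]
      rw [smul_smul, smul_eq_mul]
      congr 1
      rw [← hr_sq]
      push_cast
      simp [star_trivial, Complex.star_def, Complex.conj_ofReal]
      ring
    have hqpos : 0 < (star u' ⬝ᵥ Matrix.mulVec P u').re := by
      have := hP.dotProduct_mulVec_pos hu'_ne
      exact (Complex.lt_def.mp this).1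
    rw [hq, Complex.re_ofReal_mul, Real.log_mul hs_pos.ne' hqpos.ne']
  calc ∫ P, Real.log ((star a ⬝ᵥ Matrix.mulVec P a).re) ∂ν
      = ∫ P, (Real.log s + Real.log ((star u' ⬝ᵥ Matrix.mulVec P u').re)) ∂ν :=
        integral_congr_ae hptwise
    _ = Real.log s + ∫ P, Real.log ((star u' ⬝ᵥ Matrix.mulVec P u').re) ∂ν := by
        rw [integral_add (integrable_const _) (hint u' hu'_unit), integral_const]
        simp
    _ = Real.log s + ∫ P, Real.log ((star u ⬝ᵥ Matrix.mulVec P u).re) ∂ν := by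
        rw [parta u' u hu'_unit hu]
end

section
/- For every t ∈ ℝ, ∫_ℂ e^{−|ξ|²} · |2|ξ|² − t²| dA(ξ) = π·(t² − 2 + 4·e^{−t²/2}), where dA is Lebesgue (area) measure on ℂ ≅ ℝ². (This evaluates, in complex dimension one, the Gaussian integral over 1×1 complex symmetric matrices appearing in the universal density f_m of critical values of random holomorphic sections, yielding the explicit form of f₁.) -/
open MeasureTheory Set Real

private lemma hasDerivAt_G (t : ℝ) (x : ℝ) :
    HasDerivAt (fun x : ℝ => Real.exp (-x ^ 2) * (x ^ 2 + (1 - t ^ 2 / 2)))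
      (x * Real.exp (-x ^ 2) * (t ^ 2 - 2 * x ^ 2)) x := by
  have h1 : HasDerivAt (fun x : ℝ => -x ^ 2) (-(2 * x)) x := by
    simpa using (hasDerivAt_pow 2 x).fun_neg
  have h2 := h1.exp
  have h3 : HasDerivAt (fun x : ℝ => x ^ 2 + (1 - t ^ 2 / 2)) (2 * x) x := by
    simpa using (hasDerivAt_pow 2 x).add_const (1 - t ^ 2 / 2)
  have := h2.fun_mul h3
  refine this.congr_deriv ?_
  ring

private lemma tendsto_G (t : ℝ) :
    Filter.Tendsto (fun x : ℝ => Real.exp (-x ^ 2) * (x ^ 2 + (1 - t ^ 2 / 2)))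
      Filter.atTop (nhds 0) := by
  have hsq : Filter.Tendsto (fun x : ℝ => x ^ 2) Filter.atTop Filter.atTop :=
    Filter.tendsto_pow_atTop two_ne_zero
  have h1 : Filter.Tendsto (fun y : ℝ => y * Real.exp (-y)) Filter.atTop (nhds 0) := by
    simpa using Real.tendsto_pow_mul_exp_neg_atTop_nhds_zero 1
  have h2 : Filter.Tendsto (fun y : ℝ => Real.exp (-y)) Filter.atTop (nhds 0) :=
    Real.tendsto_exp_neg_atTop_nhds_zero
  have := ((h1.comp hsq).add (((h2.comp hsq)).const_mul (1 - t ^ 2 / 2)))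
  simp only [Function.comp, add_zero, mul_zero, zero_add] at this
  convert this using 2 with x
  ring

/-- The Gaussian integral over `1×1` complex symmetric matrices appearing in the
universal density of critical values of random holomorphic sections (dimension
one case): `∫_ℂ e^{-|ξ|²} |2|ξ|² - t²| dA(ξ) = π (t² - 2 + 4 e^{-t²/2})`. -/
theorem critical_value_density_dim_one (t : ℝ) :
    ∫ ξ : ℂ, Real.exp (-‖ξ‖ ^ 2) * |2 * ‖ξ‖ ^ 2 - t ^ 2|
      = Real.pi * (t ^ 2 - 2 + 4 * Real.exp (-t ^ 2 / 2)) := by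
  set a : ℝ := t ^ 2 / 2 with ha
  have ha0 : 0 ≤ a := by positivity
  set x₀ : ℝ := Real.sqrt a with hx₀
  have hx₀0 : 0 ≤ x₀ := Real.sqrt_nonneg a
  have hx₀sq : x₀ ^ 2 = a := Real.sq_sqrt ha0
  set f : ℝ → ℝ := fun x => x * (Real.exp (-x ^ 2) * |2 * x ^ 2 - t ^ 2|) with hf
  set G : ℝ → ℝ := fun x => Real.exp (-x ^ 2) * (x ^ 2 + (1 - t ^ 2 / 2)) with hG
  have hfc : Continuous f := by
    apply continuous_id.mul
    exact ((Real.continuous_exp.comp (continuous_pow 2).neg).mul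
      ((continuous_const.mul (continuous_pow 2)).sub continuous_const).abs)
  -- Step 1: polar coordinates
  have hpolar : (∫ ξ : ℂ, Real.exp (-‖ξ‖ ^ 2) * |2 * ‖ξ‖ ^ 2 - t ^ 2|)
      = (2 * π) * ∫ x in Ioi (0 : ℝ), f x := by
    calc (∫ ξ : ℂ, Real.exp (-‖ξ‖ ^ 2) * |2 * ‖ξ‖ ^ 2 - t ^ 2|)
        = ∫ p in Ioi (0 : ℝ) ×ˢ Ioo (-π) π,
            p.1 * (Real.exp (-|p.1| ^ 2) * |2 * |p.1| ^ 2 - t ^ 2|) := by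
          rw [← Complex.integral_comp_polarCoord_symm]
          simp_rw [Complex.norm_polarCoord_symm, smul_eq_mul]
          rfl
      _ = (∫ x in Ioi (0 : ℝ), x * (Real.exp (-|x| ^ 2) * |2 * |x| ^ 2 - t ^ 2|))
            * ∫ _ in Ioo (-π) π, (1 : ℝ) := by
          rw [← setIntegral_prod_mul, Measure.volume_eq_prod]
          simp_rw [mul_one]
      _ = (2 * π) * ∫ x in Ioi (0 : ℝ), x * (Real.exp (-|x| ^ 2) * |2 * |x| ^ 2 - t ^ 2|) := by
          rw [integral_const, measureReal_restrict_apply_univ,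
            Real.volume_real_Ioo_of_le (by linarith [Real.pi_pos]), sub_neg_eq_add, ← two_mul,
            smul_eq_mul, mul_one, mul_comm]
      _ = (2 * π) * ∫ x in Ioi (0 : ℝ), f x := by
          congr 1
          refine setIntegral_congr_fun measurableSet_Ioi (fun x hx => ?_)
          rw [abs_of_nonneg (le_of_lt hx)]
  -- Step 2: the integral over (x₀, ∞)
  have hderivG : ∀ x : ℝ, HasDerivAt (fun y => -G y) (x * Real.exp (-x ^ 2) * (2 * x ^ 2 - t ^ 2)) x := by
    intro x
    have := (hasDerivAt_G t x).fun_neg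
    refine this.congr_deriv ?_
    ring
  have htail : ∫ x in Ioi x₀, f x = Real.exp (-a) := by
    have key : ∫ x in Ioi x₀, x * Real.exp (-x ^ 2) * (2 * x ^ 2 - t ^ 2) = 0 - (-G x₀) := by
      refine integral_Ioi_of_hasDerivAt_of_nonneg' (fun x _ => hderivG x) (fun x hx => ?_) ?_
      · have hx0 : (0 : ℝ) < x := lt_of_le_of_lt hx₀0 hx
        have hxx : a ≤ x ^ 2 := by
          rw [← hx₀sq]
          exact pow_le_pow_left₀ hx₀0 (le_of_lt hx) 2
        have : t ^ 2 ≤ 2 * x ^ 2 := by rw [ha] at hxx; linarith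
        have h1 : 0 ≤ 2 * x ^ 2 - t ^ 2 := by linarith
        positivity
      · simpa using (tendsto_G t).neg
    have heq : ∀ x ∈ Ioi x₀, f x = x * Real.exp (-x ^ 2) * (2 * x ^ 2 - t ^ 2) := by
      intro x hx
      have hxx : a ≤ x ^ 2 := by
        rw [← hx₀sq]
        exact pow_le_pow_left₀ hx₀0 (le_of_lt hx) 2
      have h1 : 0 ≤ 2 * x ^ 2 - t ^ 2 := by rw [ha] at hxx; linarith
      rw [hf]
      simp only
      rw [abs_of_nonneg h1]
      ring
    rw [setIntegral_congr_fun measurableSet_Ioi heq, key]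
    simp only [zero_sub, neg_neg, hG]
    rw [hx₀sq]
    ring_nf
    rw [ha]; ring
  -- Step 3: the integral over (0, x₀]
  have hhead : ∫ x in Ioc 0 x₀, f x = Real.exp (-a) - (1 - a) := by
    have heq : ∀ x ∈ Ioc (0:ℝ) x₀, f x = x * Real.exp (-x ^ 2) * (t ^ 2 - 2 * x ^ 2) := by
      intro x hx
      have hxx : x ^ 2 ≤ a := by
        rw [← hx₀sq]
        exact pow_le_pow_left₀ (le_of_lt hx.1) hx.2 2
      have h1 : 2 * x ^ 2 - t ^ 2 ≤ 0 := by rw [ha] at hxx; linarith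
      rw [hf]
      simp only
      rw [abs_of_nonpos h1]
      ring
    rw [setIntegral_congr_fun measurableSet_Ioc heq,
      ← intervalIntegral.integral_of_le hx₀0]
    have := intervalIntegral.integral_eq_sub_of_hasDerivAt
      (a := (0:ℝ)) (b := x₀) (f := G)
      (f' := fun x => x * Real.exp (-x ^ 2) * (t ^ 2 - 2 * x ^ 2))
      (fun x _ => hasDerivAt_G t x) ?_
    · rw [this]
      simp only [hG]
      rw [hx₀sq]
      simp [Real.exp_zero]
      rw [ha]; ring
    · apply Continuous.intervalIntegrable
      exact (continuous_id.mul (Real.continuous_exp.comp (continuous_pow 2).neg)).mul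
        (continuous_const.sub (continuous_const.mul (continuous_pow 2)))
  -- Step 4: combine
  have hsplit : ∫ x in Ioi (0:ℝ), f x = (∫ x in Ioc 0 x₀, f x) + ∫ x in Ioi x₀, f x := by
    rw [← setIntegral_union (Ioc_disjoint_Ioi le_rfl) measurableSet_Ioi]
    · rw [Ioc_union_Ioi_eq_Ioi hx₀0]
    · exact hfc.integrableOn_Ioc
    · have hint : IntegrableOn (fun x => x * Real.exp (-x ^ 2) * (2 * x ^ 2 - t ^ 2)) (Ioi x₀) := by
        refine integrableOn_Ioi_deriv_of_nonneg' (l := 0) (fun x _ => hderivG x) (fun x hx => ?_) ?_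
        · have hx0 : (0 : ℝ) < x := lt_of_le_of_lt hx₀0 hx
          have hxx : a ≤ x ^ 2 := by
            rw [← hx₀sq]
            exact pow_le_pow_left₀ hx₀0 (le_of_lt hx) 2
          have h1 : 0 ≤ 2 * x ^ 2 - t ^ 2 := by rw [ha] at hxx; linarith
          positivity
        · simpa using (tendsto_G t).neg
      refine hint.congr_fun (fun x hx => ?_) measurableSet_Ioi
      have hxx : a ≤ x ^ 2 := by
        rw [← hx₀sq]
        exact pow_le_pow_left₀ hx₀0 (le_of_lt hx) 2
      have h1 : 0 ≤ 2 * x ^ 2 - t ^ 2 := by rw [ha] at hxx; linarith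
      rw [hf]
      simp only
      rw [abs_of_nonneg h1]
      ring
  rw [hpolar, hsplit, hhead, htail]
  have : -a = -t ^ 2 / 2 := by rw [ha]; ring
  rw [this, ha]
  ring
end
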